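/- Let (a,s,t) ∈ Q_1(e^j, k e^{−1/4}, e^{−1/2} m) for j,k ∈ ℤ, m ∈ ℤ². Then: (C1) e^{j−1/2} ≤ a ≤ e^{j+1/2}; (C2) |k|/√e − 1/2 ≤ |s| ≤ |k| + 1/2; and if additionally ‖m‖_∞ > 3e/2 then ‖t‖_∞ ≥ ‖m‖_∞/(3e). -/

import Mathlib

open MeasureTheory Real Filter Set
open scoped ENNReal
noncomputable section

/-- The parabolic scaling matrix `A_a = diag(a, √a)` acting on `ℝ²`. -/
def Aa (a : ℝ) (t : ℝ × ℝ) : ℝ × ℝ := (a * t.1, Real.sqrt a * t.2)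

/-- The shear matrix `S_s = [[1,s],[0,1]]` acting on `ℝ²`. -/
def Ss (s : ℝ) (t : ℝ × ℝ) : ℝ × ℝ := (t.1 + s * t.2, t.2)

/-- Underlying space of the shearlet group: `(a, s, t₁, t₂)`. -/
abbrev SG := ℝ × ℝ × ℝ × ℝ

/-- Shearlet group multiplication
`(a,s,t)·(a',s',t') = (a'a, s' + s√a', t' + S_{s'} A_{a'} t)`. -/
def smul (p q : SG) : SG :=
  (q.1 * p.1, q.2.1 + p.2.1 * Real.sqrt q.1, q.2.2 + Ss q.2.1 (Aa q.1 p.2.2))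

/-- The box `Q_h = [e^{-h/2}, e^{h/2}) × [-h/2, h/2) × [-h/2, h/2)²`. -/
def Qbox (h : ℝ) : Set SG :=
  Set.Ico (Real.exp (-h/2)) (Real.exp (h/2)) ×ˢ
    (Set.Ico (-h/2) (h/2) ×ˢ (Set.Ico (-h/2) (h/2) ×ˢ Set.Ico (-h/2) (h/2)))

/-- The left-translated box `Q_h(g) = g · Q_h`. -/
def boxAt (h : ℝ) (g : SG) : Set SG := (fun p => smul g p) '' Qbox h

set_option maxHeartbeats 1000000 in
/-- If `(a,s,t) ∈ Q_1(e^j, k e^{−1/4}, e^{−1/2} m)`, then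
(C1) `e^{j−1/2} ≤ a ≤ e^{j+1/2}`; (C2) `|k|/√e − 1/2 ≤ |s| ≤ |k| + 1/2`; and
if `‖m‖_∞ > 3e/2` then `‖t‖_∞ ≥ ‖m‖_∞/(3e)`. -/
theorem box_membership_estimates (j k : ℤ) (m : ℤ × ℤ) (a s : ℝ) (t : ℝ × ℝ)
    (hmem : (a, s, t.1, t.2) ∈ boxAt 1 (Real.exp (j : ℝ), (k : ℝ) * Real.exp (-(1:ℝ)/4),
      Real.exp (-(1:ℝ)/2) * m.1, Real.exp (-(1:ℝ)/2) * m.2)) :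
    (Real.exp ((j : ℝ) - 1/2) ≤ a ∧ a ≤ Real.exp ((j : ℝ) + 1/2)) ∧
    (|(k : ℝ)| / Real.sqrt (Real.exp 1) - 1/2 ≤ |s| ∧ |s| ≤ |(k : ℝ)| + 1/2) ∧
    (max |(m.1 : ℝ)| |(m.2 : ℝ)| > 3 * Real.exp 1 / 2 →
      max |t.1| |t.2| ≥ max |(m.1 : ℝ)| |(m.2 : ℝ)| / (3 * Real.exp 1)) := by
  obtain ⟨⟨x, y, z1, z2⟩, hq, heq⟩ := hmem
  simp only [Qbox, Set.mem_prod, Set.mem_Ico] at hq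
  simp only [smul, Aa, Ss, Prod.mk.injEq, Prod.ext_iff, Prod.fst_add, Prod.snd_add] at heq
  obtain ⟨⟨hx1, hx2⟩, ⟨hy1, hy2⟩, ⟨hz11, hz12⟩, hz21, hz22⟩ := hq
  obtain ⟨ha, hs, ht1, ht2⟩ := heq
  have hx0 : (0:ℝ) < x := lt_of_lt_of_le (Real.exp_pos _) hx1
  have hej : (0:ℝ) < Real.exp (j:ℝ) := Real.exp_pos _
  have hsx1 : Real.exp (-(1:ℝ)/4) ≤ Real.sqrt x := by
    have := Real.sqrt_le_sqrt hx1
    rwa [← Real.exp_half, show (-1:ℝ)/2/2 = -(1:ℝ)/4 by norm_num] at this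
  have hsx2 : Real.sqrt x ≤ Real.exp ((1:ℝ)/4) := by
    have := Real.sqrt_le_sqrt hx2.le
    rwa [← Real.exp_half, show (1:ℝ)/2/2 = (1:ℝ)/4 by norm_num] at this
  have hsx0 : (0:ℝ) ≤ Real.sqrt x := Real.sqrt_nonneg x
  refine ⟨⟨?_, ?_⟩, ⟨?_, ?_⟩, ?_⟩
  · rw [show (j:ℝ) - 1/2 = -1/2 + j by ring, Real.exp_add, ← ha]
    exact mul_le_mul_of_nonneg_right hx1 hej.le
  · rw [show (j:ℝ) + 1/2 = 1/2 + j by ring, Real.exp_add, ← ha]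
    exact mul_le_mul_of_nonneg_right hx2.le hej.le
  · -- lower bound for |s|
    have h1 : |(k:ℝ) * Real.exp (-(1:ℝ)/4) * Real.sqrt x| = |(k:ℝ)| * (Real.exp (-(1:ℝ)/4) * Real.sqrt x) := by
      rw [abs_mul, abs_mul, abs_of_pos (Real.exp_pos _), abs_of_nonneg hsx0, mul_assoc]
    have h2 : |(k:ℝ) * Real.exp (-(1:ℝ)/4) * Real.sqrt x| - |y| ≤ |s| := by
      rw [← hs]
      have := abs_add_le y ((k:ℝ) * Real.exp (-(1:ℝ)/4) * Real.sqrt x)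
      have h3 : |(k:ℝ) * Real.exp (-(1:ℝ)/4) * Real.sqrt x| = |(y + (k:ℝ) * Real.exp (-(1:ℝ)/4) * Real.sqrt x) - y| := by ring_nf
      rw [h3]
      have := abs_sub (y + (k:ℝ) * Real.exp (-(1:ℝ)/4) * Real.sqrt x) y
      linarith
    have hy : |y| ≤ 1/2 := abs_le.mpr ⟨by linarith, hy2.le⟩
    have hk0 : (0:ℝ) ≤ |(k:ℝ)| := abs_nonneg _
    have hsqe : |(k:ℝ)| / Real.sqrt (Real.exp 1) = |(k:ℝ)| * Real.exp (-(1:ℝ)/2) := by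
      rw [← Real.exp_half, show (1:ℝ)/2 = -(-(1:ℝ)/2) by norm_num, Real.exp_neg, div_eq_mul_inv, inv_inv]
    have hmm : Real.exp (-(1:ℝ)/4) * Real.exp (-(1:ℝ)/4) = Real.exp (-(1:ℝ)/2) := by
      rw [← Real.exp_add]; norm_num
    have h4 : |(k:ℝ)| * Real.exp (-(1:ℝ)/2) ≤ |(k:ℝ)| * (Real.exp (-(1:ℝ)/4) * Real.sqrt x) := by
      rw [← hmm]
      apply mul_le_mul_of_nonneg_left _ hk0
      exact mul_le_mul_of_nonneg_left hsx1 (Real.exp_pos _).le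
    rw [hsqe]
    rw [h1] at h2
    linarith
  · -- upper bound for |s|
    rw [← hs]
    have h1 : |y + (k:ℝ) * Real.exp (-(1:ℝ)/4) * Real.sqrt x| ≤ |y| + |(k:ℝ)| * Real.exp (-(1:ℝ)/4) * Real.sqrt x := by
      have := abs_add_le y ((k:ℝ) * Real.exp (-(1:ℝ)/4) * Real.sqrt x)
      rw [abs_mul, abs_mul, abs_of_pos (Real.exp_pos _), abs_of_nonneg hsx0] at this
      exact this
    have hy : |y| ≤ 1/2 := abs_le.mpr ⟨by linarith, hy2.le⟩
    have h2 : Real.exp (-(1:ℝ)/4) * Real.sqrt x ≤ 1 := by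
      have := mul_le_mul_of_nonneg_left hsx2 (Real.exp_pos (-(1:ℝ)/4)).le
      rwa [← Real.exp_add, show -(1:ℝ)/4 + 1/4 = 0 by norm_num, Real.exp_zero] at this
    have h3 : |(k:ℝ)| * (Real.exp (-(1:ℝ)/4) * Real.sqrt x) ≤ |(k:ℝ)| * 1 :=
      mul_le_mul_of_nonneg_left h2 (abs_nonneg _)
    nlinarith
  · -- t estimate
    intro hM
    set M : ℝ := |(m.1:ℝ)| ⊔ |(m.2:ℝ)| with hMdef
    have hE : (0:ℝ) < Real.exp 1 := Real.exp_pos 1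
    have hM0 : 0 < M := lt_trans (by positivity) hM
    have hz1 : |z1| ≤ 1/2 := abs_le.mpr ⟨by linarith, hz12.le⟩
    have hz2 : |z2| ≤ 1/2 := abs_le.mpr ⟨by linarith, hz22.le⟩
    have hy : |y| ≤ 1/2 := abs_le.mpr ⟨by linarith, hy2.le⟩
    by_cases ht2big : M / (3 * Real.exp 1) ≤ |t.2|
    · exact le_trans ht2big (le_max_right _ _)
    push_neg at ht2big
    -- t.2 case : derive |t.2| lower bound exp(-3/4)*|m2| - 1/2
    have key2 : Real.exp (-(3:ℝ)/4) * |(m.2:ℝ)| - 1/2 ≤ |t.2| := by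
      have h1 : |Real.sqrt x * (Real.exp (-(1:ℝ)/2) * (m.2:ℝ))| = Real.sqrt x * Real.exp (-(1:ℝ)/2) * |(m.2:ℝ)| := by
        rw [abs_mul, abs_mul, abs_of_nonneg hsx0, abs_of_pos (Real.exp_pos _), mul_assoc]
      have h2 : |Real.sqrt x * (Real.exp (-(1:ℝ)/2) * (m.2:ℝ))| - |z2| ≤ |t.2| := by
        rw [← ht2]
        have ha1 := abs_add_le z2 (Real.sqrt x * (Real.exp (-(1:ℝ)/2) * (m.2:ℝ)))
        have ha2 := abs_sub (z2 + Real.sqrt x * (Real.exp (-(1:ℝ)/2) * (m.2:ℝ))) z2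
        have h3 : (z2 + Real.sqrt x * (Real.exp (-(1:ℝ)/2) * (m.2:ℝ))) - z2 = Real.sqrt x * (Real.exp (-(1:ℝ)/2) * (m.2:ℝ)) := by ring
        rw [h3] at ha2
        linarith
      have h4 : Real.exp (-(3:ℝ)/4) ≤ Real.sqrt x * Real.exp (-(1:ℝ)/2) := by
        have := mul_le_mul_of_nonneg_right hsx1 (Real.exp_pos (-(1:ℝ)/2)).le
        rwa [← Real.exp_add, show -(1:ℝ)/4 + -1/2 = -(3:ℝ)/4 by norm_num] at this
      have h5 : Real.exp (-(3:ℝ)/4) * |(m.2:ℝ)| ≤ Real.sqrt x * Real.exp (-(1:ℝ)/2) * |(m.2:ℝ)| :=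
        mul_le_mul_of_nonneg_right h4 (abs_nonneg _)
      rw [h1] at h2
      linarith
    -- since |t.2| < M/(3E), we must have M = |m1| branch effectively
    have hq14 : (1:ℝ) ≤ Real.exp ((1:ℝ)/4) := Real.one_le_exp (by norm_num)
    have hprod : Real.exp (-(3:ℝ)/4) * Real.exp 1 = Real.exp ((1:ℝ)/4) := by
      rw [← Real.exp_add]; norm_num
    have hm2lt : |(m.2:ℝ)| < M := by
      by_contra hcon
      push_neg at hcon
      have hMeq : M = |(m.2:ℝ)| := le_antisymm hcon (le_max_right _ _)
      -- contradiction: exp(-3/4) M - 1/2 ≥ M/(3E) but |t.2| < M/(3E)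
      rw [← hMeq] at key2
      have : M / (3 * Real.exp 1) ≤ Real.exp (-(3:ℝ)/4) * M - 1/2 := by
        rw [div_le_iff₀ (by positivity)]
        nlinarith
      linarith
    have hMeq1 : M = |(m.1:ℝ)| := by
      rcases max_cases |(m.1:ℝ)| |(m.2:ℝ)| with ⟨h, _⟩ | ⟨h, _⟩
      · exact h
      · rw [hMdef, h] at hm2lt; exact absurd hm2lt (lt_irrefl _)
    -- now bound |t.1|
    have ht2z : Real.sqrt x * (Real.exp (-(1:ℝ)/2) * (m.2:ℝ)) = t.2 - z2 := by linarith
    have ht1eq : t.1 = z1 + x * (Real.exp (-(1:ℝ)/2) * (m.1:ℝ)) + y * (t.2 - z2) := by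
      rw [← ht2z, ← ht1]; ring
    have hB : |x * (Real.exp (-(1:ℝ)/2) * (m.1:ℝ))| ≤ |t.1| + |z1| + |y| * (|t.2| + |z2|) := by
      have h1 : x * (Real.exp (-(1:ℝ)/2) * (m.1:ℝ)) = t.1 - z1 - y * (t.2 - z2) := by
        rw [ht1eq]; ring
      rw [h1]
      have ha1 := abs_sub (t.1 - z1) (y * (t.2 - z2))
      have ha2 := abs_sub t.1 z1
      have ha4 : |y * (t.2 - z2)| = |y| * |t.2 - z2| := abs_mul _ _
      have ha5 : |y| * |t.2 - z2| ≤ |y| * (|t.2| + |z2|) :=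
        mul_le_mul_of_nonneg_left (abs_sub t.2 z2) (abs_nonneg y)
      linarith
    have hBlow : Real.exp (-(1:ℝ)) * |(m.1:ℝ)| ≤ |x * (Real.exp (-(1:ℝ)/2) * (m.1:ℝ))| := by
      rw [abs_mul, abs_mul, abs_of_pos hx0, abs_of_pos (Real.exp_pos _), ← mul_assoc]
      apply mul_le_mul_of_nonneg_right _ (abs_nonneg _)
      calc Real.exp (-(1:ℝ)) = Real.exp (-(1:ℝ)/2) * Real.exp (-(1:ℝ)/2) := by
            rw [← Real.exp_add]; norm_num
        _ ≤ x * Real.exp (-(1:ℝ)/2) := mul_le_mul_of_nonneg_right hx1 (Real.exp_pos _).le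
    have hinv : Real.exp (-(1:ℝ)) * Real.exp 1 = 1 := by rw [← Real.exp_add]; norm_num
    have hgoal : M / (3 * Real.exp 1) ≤ |t.1| := by
      rw [div_le_iff₀ (by positivity)]
      rw [hMeq1] at ht2big hM ⊢
      have hyb : |y| * (|t.2| + |z2|) ≤ (1/2) * (|t.2| + 1/2) := by
        apply mul_le_mul hy (by linarith) (by positivity) (by norm_num)
      have hchain : Real.exp (-(1:ℝ)) * |(m.1:ℝ)| ≤ |t.1| + 3/4 + |t.2|/2 := by
        linarith
      have ht2b : |t.2| < |(m.1:ℝ)| / (3 * Real.exp 1) := ht2big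
      have ht2c : |t.2| * (3 * Real.exp 1) < |(m.1:ℝ)| := (lt_div_iff₀ (by positivity)).mp ht2b
      have s1 : Real.exp (-(1:ℝ)) * |(m.1:ℝ)| * Real.exp 1 ≤ (|t.1| + 3/4 + |t.2|/2) * Real.exp 1 :=
        mul_le_mul_of_nonneg_right hchain hE.le
      have s2 : Real.exp (-(1:ℝ)) * |(m.1:ℝ)| * Real.exp 1 = |(m.1:ℝ)| := by
        rw [mul_comm (Real.exp (-(1:ℝ))) _, mul_assoc, hinv, mul_one]
      rw [s2] at s1
      have s3 : (|t.1| + 3/4 + |t.2|/2) * Real.exp 1 = |t.1| * Real.exp 1 + 3 * Real.exp 1 / 4 + |t.2| * Real.exp 1 / 2 := by ring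
      rw [s3] at s1
      nlinarith [s1, ht2c, hM]
    exact le_trans hgoal (le_max_left _ _)

end
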